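/- arXiv:1307.4659 — 4 statements merged into one kernel-verified Lean document; each statement's English description precedes it below -/
import Mathlib

section
/- Let V : ℝ≥0 × ℝⁿ → ℝ≥0 be continuously differentiable, α₁, α₂ ∈ K∞, a ∈ ℝ, c > 0, with α₁(‖x‖) ≥ V(t,x) ≥ α₂(‖x‖) + a for all (t,x), and suppose the derivative of V along solutions of ẋ = f(t,x) satisfies V̇(t,x) ≤ 0 whenever ‖x‖ ≥ c. Then the solutions of ẋ = f(t,x) are uniformly globally bounded: there exist γ ∈ K∞ and c' > 0 such that ‖x(t,t₀,x₀)‖ ≤ γ(‖x₀‖) + c' for all t ≥ t₀. -/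
open Filter Set

/-- A class `K∞` function: continuous, strictly increasing on `[0,∞)`,
zero at zero, and unbounded. -/
def ClassKInf (α : ℝ → ℝ) : Prop :=
  Continuous α ∧ StrictMonoOn α (Set.Ici 0) ∧ α 0 = 0 ∧ Tendsto α atTop atTop

/-- A class `K∞` function admits a globally defined "inverse" which is continuous,
strictly monotone, vanishes at `0`, tends to infinity, and dominates preimages. -/
lemma ClassKInf.exists_inverse {α : ℝ → ℝ} (h : ClassKInf α) :
    ∃ β : ℝ → ℝ, Continuous β ∧ StrictMono β ∧ β 0 = 0 ∧ Tendsto β atTop atTop ∧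
      (∀ s y, 0 ≤ s → α s ≤ y → s ≤ β y) := by
  obtain ⟨hcont, hmono, h0, htop⟩ := h
  -- extend α to a globally strictly monotone function
  set g : ℝ → ℝ := fun s => if 0 ≤ s then α s else s with hg
  have hnonneg : ∀ s, 0 ≤ s → 0 ≤ α s := by
    intro s hs
    rcases eq_or_lt_of_le hs with rfl | hs'
    · exact h0.ge
    · exact (h0 ▸ hmono (le_refl (0:ℝ)) hs hs').le
  have hgval : ∀ s, 0 ≤ s → g s = α s := fun s hs => if_pos hs
  have hgcont : Continuous g := by
    have : Continuous fun s : ℝ => if (0:ℝ) ≤ s then α s else s := by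
      apply Continuous.if_le hcont continuous_id continuous_const continuous_id
      intro x hx
      simp only [id_eq] at hx
      rw [← hx, h0]
      rfl
    simpa [hg] using this
  have hgmono : StrictMono g := by
    intro s t hst
    by_cases hs : 0 ≤ s
    · have ht : 0 ≤ t := hs.trans hst.le
      simp only [hg, if_pos hs, if_pos ht]
      exact hmono hs ht hst
    · push_neg at hs
      by_cases ht : 0 ≤ t
      · simp only [hg, if_neg (not_le.mpr hs), if_pos ht]
        exact lt_of_lt_of_le hs (hnonneg t ht)
      · simp only [hg, if_neg (not_le.mpr hs), if_neg ht]
        exact hst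
  have hgtop : Tendsto g atTop atTop := by
    refine htop.congr' ?_
    filter_upwards [eventually_ge_atTop (0:ℝ)] with s hs
    exact (hgval s hs).symm
  have hgbot : Tendsto g atBot atBot := by
    refine tendsto_id.congr' ?_
    filter_upwards [eventually_le_atBot (-1:ℝ)] with s hs
    have hns : ¬ (0:ℝ) ≤ s := by linarith
    simp [hg, if_neg hns]
  have hgsurj : Function.Surjective g := hgcont.surjective hgtop hgbot
  set e : ℝ ≃o ℝ := StrictMono.orderIsoOfSurjective g hgmono hgsurj with he
  have hecoe : (e : ℝ → ℝ) = g := StrictMono.coe_orderIsoOfSurjective g hgmono hgsurj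
  refine ⟨e.symm, ?_, e.symm.strictMono, ?_, ?_, ?_⟩
  · exact e.symm.continuous
  · have : e 0 = 0 := by rw [hecoe]; simpa [hg] using h0
    rw [OrderIso.symm_apply_eq]
    exact this.symm
  · apply tendsto_atTop_atTop_of_monotone e.symm.monotone
    intro b
    exact ⟨e b, (e.symm_apply_apply b).ge⟩
  · intro s y hs hsy
    have : e s ≤ e (e.symm y) := by
      rw [e.apply_symm_apply, hecoe, hgval s hs]
      exact hsy
    exact e.le_iff_le.mp this

/-- Uniform global boundedness from a Lyapunov-like function whose derivative
along solutions is nonpositive outside the ball of radius `c`. -/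
theorem stmt_0 {n : ℕ}
    (f : ℝ → EuclideanSpace ℝ (Fin n) → EuclideanSpace ℝ (Fin n))
    (hf0 : ∀ t, f t 0 = 0)
    (sol : ℝ → EuclideanSpace ℝ (Fin n) → ℝ → EuclideanSpace ℝ (Fin n))
    (hinit : ∀ t₀ x₀, sol t₀ x₀ t₀ = x₀)
    (hode : ∀ t₀ x₀ t, t₀ ≤ t → HasDerivAt (sol t₀ x₀) (f t (sol t₀ x₀ t)) t)
    (V : ℝ → EuclideanSpace ℝ (Fin n) → ℝ)
    (hVnonneg : ∀ t x, 0 ≤ V t x)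
    (hVsmooth : ContDiff ℝ 1 fun p : ℝ × EuclideanSpace ℝ (Fin n) => V p.1 p.2)
    (α₁ α₂ : ℝ → ℝ) (a c : ℝ) (hc : 0 < c)
    (hα₁ : ClassKInf α₁) (hα₂ : ClassKInf α₂)
    (hbound : ∀ t x, α₂ ‖x‖ + a ≤ V t x ∧ V t x ≤ α₁ ‖x‖)
    (hdecr : ∀ t₀ x₀ t, t₀ ≤ t → c ≤ ‖sol t₀ x₀ t‖ →
      deriv (fun s => V s (sol t₀ x₀ s)) t ≤ 0) :
    ∃ γ c', ClassKInf γ ∧ 0 < c' ∧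
      ∀ t₀ x₀, 0 ≤ t₀ → ∀ t, t₀ ≤ t → ‖sol t₀ x₀ t‖ ≤ γ ‖x₀‖ + c' := by
  obtain ⟨β, hβcont, hβmono, hβ0, hβtop, hβinv⟩ := hα₂.exists_inverse
  obtain ⟨hα₁cont, hα₁mono, hα₁0, hα₁top⟩ := hα₁
  have hα₁nonneg : ∀ s, 0 ≤ s → 0 ≤ α₁ s := by
    intro s hs
    rcases eq_or_lt_of_le hs with rfl | hs'
    · exact hα₁0.ge
    · exact (hα₁0 ▸ hα₁mono (le_refl (0:ℝ)) hs hs').le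
  have hβnonneg : ∀ y, 0 ≤ y → 0 ≤ β y := fun y hy => hβ0 ▸ hβmono.monotone hy
  -- the key Lyapunov estimate: V along solutions stays below max of initial value and α₁ c
  have key : ∀ t₀ x₀ t, t₀ ≤ t →
      V t (sol t₀ x₀ t) ≤ max (V t₀ x₀) (α₁ c) := by
    intro t₀ x₀ t ht
    set W : ℝ → ℝ := fun s => V s (sol t₀ x₀ s) with hW
    have hWdiff : ∀ s, t₀ ≤ s → DifferentiableAt ℝ W s := by
      intro s hs
      have h1 : DifferentiableAt ℝ (fun s : ℝ => (s, sol t₀ x₀ s)) s :=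
        DifferentiableAt.prodMk differentiableAt_id (hode t₀ x₀ s hs).differentiableAt
      have h2 : DifferentiableAt ℝ (fun p : ℝ × EuclideanSpace ℝ (Fin n) => V p.1 p.2)
          (s, sol t₀ x₀ s) := (hVsmooth.differentiable one_ne_zero).differentiableAt
      exact h2.comp s h1
    set K : ℝ := max (V t₀ x₀) (α₁ c) with hK
    by_contra hcon
    push_neg at hcon
    have hWt : K < W t := hcon
    set S : Set ℝ := {s ∈ Icc t₀ t | W s ≤ K} with hS
    have hScl : IsClosed S := by
      have hWc : ContinuousOn W (Icc t₀ t) := fun s hs =>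
        (hWdiff s hs.1).continuousAt.continuousWithinAt
      exact hWc.preimage_isClosed_of_isClosed isClosed_Icc isClosed_Iic
    have hScomp : IsCompact S := (isCompact_Icc.of_isClosed_subset hScl (fun s hs => hs.1))
    have hSne : S.Nonempty := by
      refine ⟨t₀, ⟨le_refl t₀, ht⟩, ?_⟩
      simp only [hW, hinit t₀ x₀]
      exact le_max_left _ _
    set s₁ : ℝ := sSup S with hs₁
    have hs₁mem : s₁ ∈ S := hScomp.sSup_mem hSne
    have hs₁le : ∀ s ∈ S, s ≤ s₁ := fun s hs => le_csSup hScomp.bddAbove hs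
    have hs₁t : s₁ < t := by
      rcases lt_or_eq_of_le hs₁mem.1.2 with h | h
      · exact h
      · exact absurd (h ▸ hs₁mem.2) (not_le.mpr hWt)
    have ht₀s₁ : t₀ ≤ s₁ := hs₁mem.1.1
    -- on (s₁, t], W > K, hence the solution norm is ≥ c there
    have hout : ∀ s, s₁ < s → s ≤ t → c ≤ ‖sol t₀ x₀ s‖ := by
      intro s hs hst
      have hsnot : s ∉ S := fun hmem => absurd (hs₁le s hmem) (not_le.mpr hs)
      have hWs : K < W s := by
        by_contra hle
        push_neg at hle
        exact hsnot ⟨⟨ht₀s₁.trans hs.le, hst⟩, hle⟩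
      by_contra hlt
      push_neg at hlt
      have h1 : W s ≤ α₁ ‖sol t₀ x₀ s‖ := (hbound s _).2
      have h2 : α₁ ‖sol t₀ x₀ s‖ ≤ α₁ c :=
        (hα₁mono.monotoneOn) (norm_nonneg _) hc.le hlt.le
      exact absurd (h1.trans (h2.trans (le_max_right _ _))) (not_le.mpr hWs)
    -- W is antitone on [s₁, t]
    have hanti : AntitoneOn W (Icc s₁ t) := by
      apply antitoneOn_of_deriv_nonpos (convex_Icc s₁ t)
      · exact fun s hs => (hWdiff s (ht₀s₁.trans hs.1)).continuousAt.continuousWithinAt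
      · rw [interior_Icc]
        exact fun s hs => (hWdiff s (ht₀s₁.trans hs.1.le)).differentiableWithinAt
      · rw [interior_Icc]
        intro s hs
        exact hdecr t₀ x₀ s (ht₀s₁.trans hs.1.le) (hout s hs.1 hs.2.le)
    have : W t ≤ W s₁ := hanti ⟨le_refl s₁, hs₁t.le⟩ ⟨hs₁t.le, le_refl t⟩ hs₁t.le
    exact absurd (this.trans hs₁mem.2) (not_le.mpr hWt)
  -- define γ and c'
  set C : ℝ := max (α₁ c - a) 0 with hC
  refine ⟨fun r => β (2 * α₁ r), β (2 * C) + 1, ⟨?_, ?_, ?_, ?_⟩, ?_, ?_⟩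
  · exact hβcont.comp (continuous_const.mul hα₁cont)
  · intro s hs u hu hsu
    exact hβmono (by
      have := hα₁mono hs hu hsu
      linarith)
  · simp [hα₁0, hβ0]
  · exact hβtop.comp ((tendsto_const_mul_atTop_of_pos (by norm_num : (0:ℝ) < 2)).mpr hα₁top)
  · have : 0 ≤ β (2 * C) := hβnonneg _ (by positivity)
    linarith
  · intro t₀ x₀ ht₀ t ht
    have hkey := key t₀ x₀ t ht
    have h1 : α₂ ‖sol t₀ x₀ t‖ + a ≤ V t (sol t₀ x₀ t) := (hbound t _).1
    have h2 : V t₀ x₀ ≤ α₁ ‖x₀‖ := (hbound t₀ x₀).2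
    have hA : 0 ≤ α₁ ‖x₀‖ := (hVnonneg t₀ x₀).trans h2
    have hC0 : (0:ℝ) ≤ C := le_max_right _ _
    have hB0 : 0 ≤ α₁ c := hα₁nonneg c hc.le
    have hCa : α₁ c - a ≤ C := le_max_left _ _
    have h6 : α₂ ‖sol t₀ x₀ t‖ ≤ α₁ ‖x₀‖ + C := by
      have hmax : max (V t₀ x₀) (α₁ c) ≤ α₁ ‖x₀‖ + C + a := by
        apply max_le
        · linarith
        · linarith
      linarith [h1.trans hkey]
    have h7 : ‖sol t₀ x₀ t‖ ≤ β (α₁ ‖x₀‖ + C) := hβinv _ _ (norm_nonneg _) h6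
    have h8 : β (α₁ ‖x₀‖ + C) ≤ β (2 * α₁ ‖x₀‖) + β (2 * C) := by
      rcases le_total (α₁ ‖x₀‖) C with h | h
      · have h9 : β (α₁ ‖x₀‖ + C) ≤ β (2 * C) := hβmono.monotone (by linarith)
        have h10 : 0 ≤ β (2 * α₁ ‖x₀‖) := hβnonneg _ (by linarith)
        linarith
      · have h9 : β (α₁ ‖x₀‖ + C) ≤ β (2 * α₁ ‖x₀‖) := hβmono.monotone (by linarith)
        have h10 : 0 ≤ β (2 * C) := hβnonneg _ (by linarith)
        linarith
    linarith [h7, h8]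
end

section
/- Let D(q) be symmetric with d_m·I ≤ D(q) ≤ d_M·I, and let ε₁, ε₂, k_p, k_d, b > 0 satisfy k_p/(4 d_M) ≥ ε₁² and k_d/(4 b d_M) ≥ ε₂². Define V(t,x) = ½ q̃'ᵀ D q̃' + ½ k_p‖q̃‖² + (k_d/(2b))‖ϑ‖² + (ε₁ q̃ − ε₂ ϑ)ᵀ D q̃'. Then V(t,x) ≥ ¼ [q̃; q̃']ᵀ M₁ [q̃; q̃'] + ¼ [ϑ; q̃']ᵀ M₂ [ϑ; q̃'] where M₁ = [[k_p I, 2ε₁ D],[2ε₁ Dᵀ, D]] and M₂ = [[ (k_d/b) I, −2ε₂ D],[−2ε₂ Dᵀ, D]], and both M₁ and M₂ are positive semidefinite. In particular V is positive definite and radially unbounded in x = (q̃, q̃', ϑ). -/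
open Matrix

set_option maxHeartbeats 1600000 in
/-- Positivity of the cross-term-augmented Lyapunov function: block lower bound via the
positive semidefinite matrices `M₁`, `M₂`, positive definiteness and radial unboundedness. -/
theorem stmt_5 {n : ℕ}
    (dm dM e1 e2 kp kd b : ℝ)
    (hdm : 0 < dm) (hdmM : dm ≤ dM)
    (he1 : 0 < e1) (he2 : 0 < e2) (hkp : 0 < kp) (hkd : 0 < kd) (hb : 0 < b)
    (h1 : e1 ^ 2 ≤ kp / (4 * dM)) (h2 : e2 ^ 2 ≤ kd / (4 * b * dM))
    (D : ℝ → Matrix (Fin n) (Fin n) ℝ)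
    (hsym : ∀ t, (D t).IsSymm)
    (hD : ∀ t v, dm * (v ⬝ᵥ v) ≤ v ⬝ᵥ (D t).mulVec v ∧
      v ⬝ᵥ (D t).mulVec v ≤ dM * (v ⬝ᵥ v))
    (V : ℝ → (Fin n → ℝ) → (Fin n → ℝ) → (Fin n → ℝ) → ℝ)
    (hV : ∀ t q q' th, V t q q' th =
      (1/2) * (q' ⬝ᵥ (D t).mulVec q') + (1/2) * kp * (q ⬝ᵥ q) + kd / (2*b) * (th ⬝ᵥ th)
        + (e1 • q - e2 • th) ⬝ᵥ (D t).mulVec q') :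
    (∀ t, (Matrix.fromBlocks (kp • (1 : Matrix (Fin n) (Fin n) ℝ)) ((2*e1) • D t)
            ((2*e1) • (D t)ᵀ) (D t)).PosSemidef) ∧
    (∀ t, (Matrix.fromBlocks ((kd/b) • (1 : Matrix (Fin n) (Fin n) ℝ)) ((-(2*e2)) • D t)
            ((-(2*e2)) • (D t)ᵀ) (D t)).PosSemidef) ∧
    (∀ t q q' th,
      (1/4) * (Sum.elim q q' ⬝ᵥ (Matrix.fromBlocks (kp • (1 : Matrix (Fin n) (Fin n) ℝ))
          ((2*e1) • D t) ((2*e1) • (D t)ᵀ) (D t)).mulVec (Sum.elim q q'))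
        + (1/4) * (Sum.elim th q' ⬝ᵥ (Matrix.fromBlocks ((kd/b) • (1 : Matrix (Fin n) (Fin n) ℝ))
          ((-(2*e2)) • D t) ((-(2*e2)) • (D t)ᵀ) (D t)).mulVec (Sum.elim th q'))
      ≤ V t q q' th) ∧
    (∀ t q q' th, 0 ≤ V t q q' th ∧ (V t q q' th = 0 → q = 0 ∧ q' = 0 ∧ th = 0)) ∧
    (∀ M : ℝ, ∃ R : ℝ, ∀ t q q' th,
      R ≤ q ⬝ᵥ q + q' ⬝ᵥ q' + th ⬝ᵥ th → M ≤ V t q q' th) := by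
  have hdM : 0 < dM := lt_of_lt_of_le hdm hdmM
  have hnn : ∀ u : Fin n → ℝ, 0 ≤ u ⬝ᵥ u := fun u =>
    Finset.sum_nonneg fun i _ => mul_self_nonneg _
  have hkp1 : 4 * e1 ^ 2 * dM ≤ kp := by
    have := (le_div_iff₀ (by positivity : (0:ℝ) < 4 * dM)).mp h1
    linarith
  have hkd1 : 4 * e2 ^ 2 * (b * dM) ≤ kd := by
    have := (le_div_iff₀ (by positivity : (0:ℝ) < 4 * b * dM)).mp h2
    linarith
  -- symmetry of the bilinear form
  have hsymm : ∀ t (u v : Fin n → ℝ),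
      u ⬝ᵥ (D t).mulVec v = v ⬝ᵥ (D t).mulVec u := by
    intro t u v
    rw [dotProduct_mulVec, ← Matrix.mulVec_transpose, (hsym t).eq, dotProduct_comm]
  -- positivity of the form
  have hpos : ∀ t (w : Fin n → ℝ), 0 ≤ w ⬝ᵥ (D t).mulVec w := fun t w =>
    le_trans (mul_nonneg hdm.le (hnn w)) ((hD t w).1)
  -- expansion of the form on a combination
  have hexp : ∀ t (c : ℝ) (u v : Fin n → ℝ),
      (c • u + v) ⬝ᵥ (D t).mulVec (c • u + v) =
        c ^ 2 * (u ⬝ᵥ (D t).mulVec u) + 2 * c * (u ⬝ᵥ (D t).mulVec v)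
          + v ⬝ᵥ (D t).mulVec v := by
    intro t c u v
    simp only [Matrix.mulVec_add, Matrix.mulVec_smul, dotProduct_add, add_dotProduct,
      dotProduct_smul, smul_dotProduct, smul_eq_mul]
    linear_combination c * hsymm t v u
  -- cross-term bound
  have cross2 : ∀ t (a : ℝ) (u v : Fin n → ℝ),
      -(3 * a ^ 2 * (u ⬝ᵥ (D t).mulVec u) + (1/3) * (v ⬝ᵥ (D t).mulVec v)) ≤
        2 * a * (u ⬝ᵥ (D t).mulVec v) := by
    intro t a u v
    have h0 := hpos t ((3 * a) • u + v)
    rw [hexp] at h0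
    ring_nf at h0 ⊢
    linarith
  -- quadratic form of a block matrix
  have hquad : ∀ (A B C E : Matrix (Fin n) (Fin n) ℝ) (u v : Fin n → ℝ),
      Sum.elim u v ⬝ᵥ (Matrix.fromBlocks A B C E).mulVec (Sum.elim u v) =
        u ⬝ᵥ A.mulVec u + u ⬝ᵥ B.mulVec v + v ⬝ᵥ C.mulVec u + v ⬝ᵥ E.mulVec v := by
    intro A B C E u v
    rw [Matrix.fromBlocks_mulVec]
    simp only [Sum.elim_comp_inl, Sum.elim_comp_inr, sumElim_dotProduct_sumElim,
      dotProduct_add]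
    ring
  -- the two block quadratic forms, explicitly
  have hq1 : ∀ t (u v : Fin n → ℝ),
      Sum.elim u v ⬝ᵥ (Matrix.fromBlocks (kp • (1 : Matrix (Fin n) (Fin n) ℝ)) ((2*e1) • D t)
          ((2*e1) • (D t)ᵀ) (D t)).mulVec (Sum.elim u v) =
        kp * (u ⬝ᵥ u) + 4 * e1 * (u ⬝ᵥ (D t).mulVec v) + v ⬝ᵥ (D t).mulVec v := by
    intro t u v
    rw [hquad, (hsym t).eq]
    simp only [Matrix.smul_mulVec, Matrix.one_mulVec, dotProduct_smul, smul_eq_mul]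
    linear_combination (2 * e1) * hsymm t v u
  have hq2 : ∀ t (u v : Fin n → ℝ),
      Sum.elim u v ⬝ᵥ (Matrix.fromBlocks ((kd/b) • (1 : Matrix (Fin n) (Fin n) ℝ))
          ((-(2*e2)) • D t) ((-(2*e2)) • (D t)ᵀ) (D t)).mulVec (Sum.elim u v) =
        (kd/b) * (u ⬝ᵥ u) - 4 * e2 * (u ⬝ᵥ (D t).mulVec v) + v ⬝ᵥ (D t).mulVec v := by
    intro t u v
    rw [hquad, (hsym t).eq]
    simp only [Matrix.smul_mulVec, Matrix.one_mulVec, dotProduct_smul, smul_eq_mul]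
    linear_combination (-(2 * e2)) * hsymm t v u
  -- nonnegativity of the two quadratic forms (completing the square)
  have hq1nn : ∀ t (u v : Fin n → ℝ),
      0 ≤ kp * (u ⬝ᵥ u) + 4 * e1 * (u ⬝ᵥ (D t).mulVec v) + v ⬝ᵥ (D t).mulVec v := by
    intro t u v
    have h0 := hpos t ((2 * e1) • u + v)
    rw [hexp] at h0
    have hb1 := (hD t u).2
    have hm : e1 ^ 2 * (u ⬝ᵥ (D t).mulVec u) ≤ e1 ^ 2 * (dM * (u ⬝ᵥ u)) :=
      mul_le_mul_of_nonneg_left hb1 (by positivity)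
    have hm2 : (4 * e1 ^ 2 * dM) * (u ⬝ᵥ u) ≤ kp * (u ⬝ᵥ u) :=
      mul_le_mul_of_nonneg_right hkp1 (hnn u)
    nlinarith [hnn u]
  have hq2nn : ∀ t (u v : Fin n → ℝ),
      0 ≤ (kd/b) * (u ⬝ᵥ u) - 4 * e2 * (u ⬝ᵥ (D t).mulVec v) + v ⬝ᵥ (D t).mulVec v := by
    intro t u v
    have h0 := hpos t ((-(2 * e2)) • u + v)
    rw [hexp] at h0
    have hb1 := (hD t u).2
    have hm : e2 ^ 2 * (u ⬝ᵥ (D t).mulVec u) ≤ e2 ^ 2 * (dM * (u ⬝ᵥ u)) :=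
      mul_le_mul_of_nonneg_left hb1 (by positivity)
    have hkdb : 4 * e2 ^ 2 * dM ≤ kd / b := by
      rw [le_div_iff₀ hb]; nlinarith
    have hm2 : (4 * e2 ^ 2 * dM) * (u ⬝ᵥ u) ≤ (kd/b) * (u ⬝ᵥ u) :=
      mul_le_mul_of_nonneg_right hkdb (hnn u)
    nlinarith [hnn u]
  -- hermitianity
  have herm : ∀ (A : Matrix (Fin n ⊕ Fin n) (Fin n ⊕ Fin n) ℝ), A.IsSymm → A.IsHermitian := by
    intro A h
    rw [Matrix.IsHermitian, Matrix.conjTranspose_eq_transpose_of_trivial]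
    exact h
  have hsym1 : ∀ t, (Matrix.fromBlocks (kp • (1 : Matrix (Fin n) (Fin n) ℝ)) ((2*e1) • D t)
      ((2*e1) • (D t)ᵀ) (D t)).IsSymm := by
    intro t
    rw [Matrix.IsSymm, Matrix.fromBlocks_transpose, Matrix.transpose_smul,
      Matrix.transpose_smul, Matrix.transpose_transpose, Matrix.transpose_smul,
      Matrix.transpose_one, (hsym t).eq]
  have hsym2 : ∀ t, (Matrix.fromBlocks ((kd/b) • (1 : Matrix (Fin n) (Fin n) ℝ))
      ((-(2*e2)) • D t) ((-(2*e2)) • (D t)ᵀ) (D t)).IsSymm := by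
    intro t
    rw [Matrix.IsSymm, Matrix.fromBlocks_transpose, Matrix.transpose_smul,
      Matrix.transpose_smul, Matrix.transpose_transpose, Matrix.transpose_smul,
      Matrix.transpose_one, (hsym t).eq]
  have psd1 : ∀ t, (Matrix.fromBlocks (kp • (1 : Matrix (Fin n) (Fin n) ℝ)) ((2*e1) • D t)
      ((2*e1) • (D t)ᵀ) (D t)).PosSemidef := by
    intro t
    refine Matrix.PosSemidef.of_dotProduct_mulVec_nonneg (herm _ (hsym1 t)) fun x => ?_
    have hx : Sum.elim (x ∘ Sum.inl) (x ∘ Sum.inr) = x := Sum.elim_comp_inl_inr x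
    have := hq1nn t (x ∘ Sum.inl) (x ∘ Sum.inr)
    rw [← hq1 t (x ∘ Sum.inl) (x ∘ Sum.inr), hx] at this
    simpa using this
  have psd2 : ∀ t, (Matrix.fromBlocks ((kd/b) • (1 : Matrix (Fin n) (Fin n) ℝ))
      ((-(2*e2)) • D t) ((-(2*e2)) • (D t)ᵀ) (D t)).PosSemidef := by
    intro t
    refine Matrix.PosSemidef.of_dotProduct_mulVec_nonneg (herm _ (hsym2 t)) fun x => ?_
    have hx : Sum.elim (x ∘ Sum.inl) (x ∘ Sum.inr) = x := Sum.elim_comp_inl_inr x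
    have := hq2nn t (x ∘ Sum.inl) (x ∘ Sum.inr)
    rw [← hq2 t (x ∘ Sum.inl) (x ∘ Sum.inr), hx] at this
    simpa using this
  -- V expanded
  have hVexp : ∀ t q q' th, V t q q' th =
      (1/2) * (q' ⬝ᵥ (D t).mulVec q') + (1/2) * kp * (q ⬝ᵥ q) + kd / (2*b) * (th ⬝ᵥ th)
        + e1 * (q ⬝ᵥ (D t).mulVec q') - e2 * (th ⬝ᵥ (D t).mulVec q') := by
    intro t q q' th
    rw [hV]
    simp only [sub_dotProduct, smul_dotProduct, smul_eq_mul]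
    ring
  -- uniform lower bound
  have hlow : ∀ t q q' th,
      kp/8 * (q ⬝ᵥ q) + dm/6 * (q' ⬝ᵥ q') + kd/(8*b) * (th ⬝ᵥ th) ≤ V t q q' th := by
    intro t q q' th
    rw [hVexp]
    have c1 := cross2 t e1 q q'
    have c2 := cross2 t (-e2) th q'
    have m1 : e1 ^ 2 * (q ⬝ᵥ (D t).mulVec q) ≤ e1 ^ 2 * (dM * (q ⬝ᵥ q)) :=
      mul_le_mul_of_nonneg_left (hD t q).2 (by positivity)
    have m2 : e2 ^ 2 * (th ⬝ᵥ (D t).mulVec th) ≤ e2 ^ 2 * (dM * (th ⬝ᵥ th)) :=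
      mul_le_mul_of_nonneg_left (hD t th).2 (by positivity)
    have b3 := (hD t q').1
    have mk1 : (4 * e1 ^ 2 * dM) * (q ⬝ᵥ q) ≤ kp * (q ⬝ᵥ q) :=
      mul_le_mul_of_nonneg_right hkp1 (hnn q)
    have hkdb : 4 * e2 ^ 2 * dM ≤ kd / b := by
      rw [le_div_iff₀ hb]; nlinarith
    have mk2 : (4 * e2 ^ 2 * dM) * (th ⬝ᵥ th) ≤ (kd/b) * (th ⬝ᵥ th) :=
      mul_le_mul_of_nonneg_right hkdb (hnn th)
    have hbinv : kd / (2*b) = (1/2) * (kd/b) := by ring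
    have hbinv2 : kd / (8*b) = (1/8) * (kd/b) := by ring
    rw [hbinv, hbinv2]
    nlinarith [hnn q, hnn th, hnn q']
  refine ⟨psd1, psd2, ?_, ?_, ?_⟩
  · -- quarter-form lower bound
    intro t q q' th
    rw [hq1 t q q', hq2 t th q', hVexp]
    have hbinv : kd / (2*b) = (1/2) * (kd/b) := by ring
    rw [hbinv]
    have h1 : 0 ≤ kp * (q ⬝ᵥ q) := mul_nonneg hkp.le (hnn q)
    have h2 : 0 ≤ (kd/b) * (th ⬝ᵥ th) := mul_nonneg (by positivity) (hnn th)
    linarith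
  · -- positive definiteness
    intro t q q' th
    have hl := hlow t q q' th
    have hq0 : 0 ≤ kp/8 * (q ⬝ᵥ q) := mul_nonneg (by positivity) (hnn q)
    have hq'0 : 0 ≤ dm/6 * (q' ⬝ᵥ q') := mul_nonneg (by positivity) (hnn q')
    have hth0 : 0 ≤ kd/(8*b) * (th ⬝ᵥ th) := mul_nonneg (by positivity) (hnn th)
    refine ⟨by linarith, fun h0 => ?_⟩
    rw [h0] at hl
    have e1' : q ⬝ᵥ q = 0 := by
      have hx : kp/8 * (q ⬝ᵥ q) = 0 := le_antisymm (by linarith) hq0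
      rcases mul_eq_zero.mp hx with h | h
      · exact absurd h (by positivity)
      · exact h
    have e2' : q' ⬝ᵥ q' = 0 := by
      have hx : dm/6 * (q' ⬝ᵥ q') = 0 := le_antisymm (by linarith) hq'0
      rcases mul_eq_zero.mp hx with h | h
      · exact absurd h (by positivity)
      · exact h
    have e3' : th ⬝ᵥ th = 0 := by
      have hx : kd/(8*b) * (th ⬝ᵥ th) = 0 := le_antisymm (by linarith) hth0
      rcases mul_eq_zero.mp hx with h | h
      · exact absurd h (by positivity)
      · exact h
    exact ⟨dotProduct_self_eq_zero.mp e1', dotProduct_self_eq_zero.mp e2',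
      dotProduct_self_eq_zero.mp e3'⟩
  · -- radial unboundedness
    intro M
    set c := min (kp/8) (min (kd/(8*b)) (dm/6)) with hc
    have hcpos : 0 < c :=
      lt_min (by positivity) (lt_min (by positivity) (by positivity))
    refine ⟨M / c, fun t q q' th hR => ?_⟩
    have hl := hlow t q q' th
    have c1 : c ≤ kp/8 := min_le_left _ _
    have c2 : c ≤ kd/(8*b) := le_trans (min_le_right _ _) (min_le_left _ _)
    have c3 : c ≤ dm/6 := le_trans (min_le_right _ _) (min_le_right _ _)
    have h3 : c * (q ⬝ᵥ q + q' ⬝ᵥ q' + th ⬝ᵥ th) ≤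
        kp/8 * (q ⬝ᵥ q) + dm/6 * (q' ⬝ᵥ q') + kd/(8*b) * (th ⬝ᵥ th) := by
      have p1 := mul_le_mul_of_nonneg_right c1 (hnn q)
      have p2 := mul_le_mul_of_nonneg_right c3 (hnn q')
      have p3 := mul_le_mul_of_nonneg_right c2 (hnn th)
      linarith
    have h4 : M ≤ c * (q ⬝ᵥ q + q' ⬝ᵥ q' + th ⬝ᵥ th) := by
      have := mul_le_mul_of_nonneg_left hR hcpos.le
      rwa [mul_div_cancel₀ M hcpos.ne'] at this
    linarith
end

section
/- Let A ∈ ℝⁿˣⁿ be symmetric with d_m·I ≤ A ≤ d_M·I (0 < d_m ≤ d_M), and ε > 0 with α/(4 d_M) ≥ ε². Then the block matrix [[α·I, 2ε·A],[2ε·Aᵀ, A]] ∈ ℝ²ⁿˣ²ⁿ is positive semidefinite. -/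
open Matrix

private lemma smul_psd {n : ℕ} {c : ℝ} {M : Matrix (Fin n) (Fin n) ℝ} (hc : 0 ≤ c)
    (hM : M.PosSemidef) : (c • M).PosSemidef := by
  refine ⟨?_, fun x => ?_⟩
  · rw [Matrix.IsHermitian, conjTranspose_smul, hM.1.eq, star_trivial]
  · exact (hM.smul hc).2 x

private lemma smul_one_pd {n : ℕ} {c : ℝ} (hc : 0 < c) :
    ((c • (1 : Matrix (Fin n) (Fin n) ℝ))).PosDef := by
  refine ⟨?_, fun x hx => ?_⟩
  · rw [Matrix.IsHermitian, conjTranspose_smul, conjTranspose_one, star_trivial]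
  · exact (Matrix.PosDef.one.smul hc).2 hx

/-- Key block-matrix lemma: for symmetric `A` with `d_m·I ≤ A ≤ d_M·I` and
`α/(4 d_M) ≥ ε²`, the block matrix `[[α·I, 2ε·A],[2ε·Aᵀ, A]]` is positive semidefinite. -/
theorem stmt_6 {n : ℕ} (A : Matrix (Fin n) (Fin n) ℝ) (dm dM e a : ℝ)
    (hdm : 0 < dm) (hdmM : dm ≤ dM) (he : 0 < e) (ha : 0 < a)
    (hsym : A.IsSymm)
    (hlow : (A - dm • (1 : Matrix (Fin n) (Fin n) ℝ)).PosSemidef)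
    (hhigh : (dM • (1 : Matrix (Fin n) (Fin n) ℝ) - A).PosSemidef)
    (hcond : e ^ 2 ≤ a / (4 * dM)) :
    (Matrix.fromBlocks (a • (1 : Matrix (Fin n) (Fin n) ℝ)) ((2*e) • A)
      ((2*e) • Aᵀ) A).PosSemidef := by
  have hdM : 0 < dM := hdm.trans_le hdmM
  have hApd : A.PosDef := by
    have hA : A = (A - dm • (1 : Matrix (Fin n) (Fin n) ℝ)) + dm • 1 := by abel
    rw [hA]
    exact Matrix.PosDef.posSemidef_add hlow (smul_one_pd hdm)
  haveI : Invertible A := hApd.isUnit.invertible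
  have hherm : ((2*e) • A)ᴴ = (2*e) • Aᵀ := by
    rw [conjTranspose_smul, star_trivial]
    congr 1
  rw [← hherm]
  rw [Matrix.PosDef.fromBlocks₂₂ _ _ hApd]
  have hAT : Aᵀ = A := hsym
  have key : a • (1 : Matrix (Fin n) (Fin n) ℝ) - (2*e) • A * A⁻¹ * ((2*e) • A)ᴴ
      = (a - 4*e^2*dM) • (1 : Matrix (Fin n) (Fin n) ℝ)
        + (4*e^2) • (dM • (1 : Matrix (Fin n) (Fin n) ℝ) - A) := by
    rw [hherm, hAT]
    simp only [Matrix.smul_mul, Matrix.mul_smul, Matrix.mul_inv_of_invertible,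
      Matrix.one_mul, smul_smul]
    module
  rw [key]
  have hcoef : 0 ≤ a - 4*e^2*dM := by
    rw [le_div_iff₀ (by positivity)] at hcond
    nlinarith
  exact (smul_psd hcoef Matrix.PosSemidef.one).add (smul_psd (by positivity) hhigh)
end

section
/- Let ϑ solve ϑ̇ = −a ϑ + ν(t) on [t₀, T), where ν : [t₀,T) → ℝⁿ is bounded and uniformly continuous and a > 0. Then for every τ ∈ (t₀, T) and every Δ > 0 there exists a* > 0 (depending only on Δ and the modulus of continuity and bound of ν) such that if a ≥ a*, then ‖ϑ̇(t)‖ ≤ Δ for all t ∈ [τ, T). In other words, ϑ̇(t) → 0 as a → ∞, uniformly on [τ, T). -/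
open MeasureTheory intervalIntegral Filter

set_option maxHeartbeats 1000000 in
/-- Kalsi-type lemma: for `ϑ̇ = −aϑ + ν(t)` on `[t₀,T)` with `ν` bounded and uniformly
continuous, the derivative `ϑ̇` becomes uniformly small on `[τ,T)` as `a → ∞`. -/
theorem stmt_8 {n : ℕ} (t₀ : ℝ) (T : EReal) (hT : (t₀ : EReal) < T)
    (ν : ℝ → EuclideanSpace ℝ (Fin n)) (Mb : ℝ)
    (hbound : ∀ t, t₀ ≤ t → (t : EReal) < T → ‖ν t‖ ≤ Mb)
    (hUC : ∀ ε > (0:ℝ), ∃ δ > (0:ℝ), ∀ s t : ℝ, t₀ ≤ s → (s : EReal) < T →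
      t₀ ≤ t → (t : EReal) < T → |t - s| ≤ δ → ‖ν t - ν s‖ ≤ ε)
    (θ : ℝ → ℝ → EuclideanSpace ℝ (Fin n)) (θ₀ : EuclideanSpace ℝ (Fin n))
    (hinit : ∀ a, θ a t₀ = θ₀)
    (hode : ∀ a, 0 < a → ∀ t, t₀ ≤ t → (t : EReal) < T →
      HasDerivAt (θ a) (-a • θ a t + ν t) t) :
    ∀ τ, t₀ < τ → (τ : EReal) < T → ∀ Δ > (0:ℝ), ∃ astar > (0:ℝ), ∀ a, astar ≤ a →
      ∀ t, τ ≤ t → (t : EReal) < T → ‖-a • θ a t + ν t‖ ≤ Δ := by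
  intro τ hτ hτT Δ hΔ
  have hMb : 0 ≤ Mb := le_trans (norm_nonneg _) (hbound t₀ le_rfl hT)
  obtain ⟨δ, hδpos, hδν⟩ := hUC (Δ/2) (by linarith)
  set δ' := min δ (τ - t₀) with hδ'def
  have hδ' : (0:ℝ) < δ' := lt_min hδpos (by linarith)
  -- continuity of ν on compact subintervals of the domain
  have hcont : ∀ t', t₀ ≤ t' → (t':EReal) < T → ContinuousOn ν (Set.Icc t₀ t') := by
    intro t' ht'0 ht'T
    rw [Metric.continuousOn_iff]
    intro b hb ε hε
    obtain ⟨d, hd, hdν⟩ := hUC (ε/2) (by linarith)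
    refine ⟨d, hd, fun x hx hxb => ?_⟩
    have hxT : (x:EReal) < T := lt_of_le_of_lt (EReal.coe_le_coe_iff.mpr hx.2) ht'T
    have hbT : (b:EReal) < T := lt_of_le_of_lt (EReal.coe_le_coe_iff.mpr hb.2) ht'T
    have h2 := hdν b x hb.1 hbT hx.1 hxT (le_of_lt (by rwa [Real.dist_eq] at hxb))
    calc dist (ν x) (ν b) = ‖ν x - ν b‖ := dist_eq_norm _ _
      _ ≤ ε/2 := h2
      _ < ε := by linarith
  -- choose astar from the decay of a ↦ exp(-aδ')(a‖θ₀‖+3Mb)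
  have h1 : Tendsto (fun a : ℝ => a * δ') atTop atTop :=
    Tendsto.atTop_mul_const hδ' tendsto_id
  have h2 := (Real.tendsto_pow_mul_exp_neg_atTop_nhds_zero 1).comp h1
  have h3 : Tendsto (fun a : ℝ => a * Real.exp (-(a*δ'))) atTop (nhds 0) := by
    have h4 := h2.const_mul (δ'⁻¹)
    rw [mul_zero] at h4
    refine h4.congr fun a => ?_
    simp only [Function.comp, pow_one]
    field_simp
  have h5 : Tendsto (fun a : ℝ => Real.exp (-(a*δ'))) atTop (nhds 0) := by
    refine Real.tendsto_exp_atBot.comp ?_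
    exact tendsto_neg_atBot_iff.mpr h1
  have htend : Tendsto (fun a : ℝ => Real.exp (-(a*δ')) * (a*‖θ₀‖ + 3*Mb)) atTop (nhds 0) := by
    have := (h3.const_mul ‖θ₀‖).add (h5.const_mul (3*Mb))
    rw [mul_zero, mul_zero, add_zero] at this
    refine this.congr fun a => ?_
    ring
  obtain ⟨N, hN⟩ := eventually_atTop.mp (htend.eventually_le_const (by linarith : (0:ℝ) < Δ/2))
  refine ⟨max N 1, lt_of_lt_of_le one_pos (le_max_right _ _), fun a ha t ht htT => ?_⟩
  have ha0 : (0:ℝ) < a := lt_of_lt_of_le one_pos (le_trans (le_max_right _ _) ha)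
  have htτ : t₀ ≤ t := le_trans hτ.le ht
  have hδτ : δ' ≤ τ - t₀ := min_le_right _ _
  have hm0 : t₀ ≤ t - δ' := by linarith
  have hmt : t - δ' ≤ t := by linarith
  set m := t - δ' with hmdef
  have hEa := Real.exp_ne_zero
  -- pointwise derivative of the integrating-factor product
  have hexpD : ∀ x : ℝ, HasDerivAt (fun u => Real.exp (a*u)) (a * Real.exp (a*x)) x := by
    intro x
    simpa [mul_comm, Function.comp_def] using (Real.hasDerivAt_exp (a*x)).comp x ((hasDerivAt_id x).const_mul a)
  have hcontI : ContinuousOn ν (Set.Icc t₀ t) := hcont t htτ htT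
  have hconte : Continuous (fun s : ℝ => Real.exp (a*s)) :=
    Real.continuous_exp.comp (continuous_const.mul continuous_id)
  have hint1 : IntervalIntegrable (fun s => Real.exp (a*s) • ν s) volume t₀ t := by
    apply ContinuousOn.intervalIntegrable
    rw [Set.uIcc_of_le htτ]
    exact hconte.continuousOn.smul hcontI
  have hintc : IntervalIntegrable (fun s => Real.exp (a*s) • ν t) volume t₀ t :=
    (hconte.smul continuous_const).intervalIntegrable _ _
  -- Duhamel
  have key : ∫ s in t₀..t, Real.exp (a*s) • ν s
      = Real.exp (a*t) • θ a t - Real.exp (a*t₀) • θ₀ := by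
    rw [← hinit a]
    apply intervalIntegral.integral_eq_sub_of_hasDerivAt _ hint1
    intro x hx
    rw [Set.uIcc_of_le htτ] at hx
    have hxT : (x:EReal) < T := lt_of_le_of_lt (EReal.coe_le_coe_iff.mpr hx.2) htT
    have := (hexpD x).smul (hode a ha0 x hx.1 hxT)
    convert this using 1
    · rfl
    rw [smul_add, smul_smul]
    module
  have expint : ∀ c d : ℝ, ∫ s in c..d, Real.exp (a*s)
      = (Real.exp (a*d) - Real.exp (a*c)) / a := by
    intro c d
    have : ∫ s in c..d, Real.exp (a*s)
        = Real.exp (a*d)/a - Real.exp (a*c)/a := by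
      apply intervalIntegral.integral_eq_sub_of_hasDerivAt
      · intro x _
        simpa [mul_div_cancel_left₀ _ (ne_of_gt ha0)] using (hexpD x).div_const a
      · exact hconte.intervalIntegrable _ _
    rw [this]; ring
  set I := ∫ s in t₀..t, Real.exp (a*s) • (ν t - ν s) with hIdef
  have hI : I = ((Real.exp (a*t) - Real.exp (a*t₀))/a) • ν t
      - (Real.exp (a*t) • θ a t - Real.exp (a*t₀) • θ₀) := by
    rw [hIdef, ← key, ← expint t₀ t, ← intervalIntegral.integral_smul_const,
      ← intervalIntegral.integral_sub hintc hint1]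
    congr 1
    funext s
    rw [smul_sub]
  -- the decomposition identity
  have e1 : a * Real.exp (-(a*t)) * ((Real.exp (a*t) - Real.exp (a*t₀))/a)
      = 1 - Real.exp (a*t₀ - a*t) := by
    rw [Real.exp_sub, Real.exp_neg]
    field_simp
  have e2 : a * Real.exp (-(a*t)) * Real.exp (a*t) = a := by
    rw [Real.exp_neg]; field_simp
  have e3 : a * Real.exp (-(a*t)) * Real.exp (a*t₀) = a * Real.exp (a*t₀ - a*t) := by
    rw [Real.exp_sub, Real.exp_neg]; field_simp
  have hD : -a • θ a t + ν t = (a * Real.exp (-(a*t))) • I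
      + Real.exp (a*t₀ - a*t) • ν t - (a * Real.exp (a*t₀ - a*t)) • θ₀ := by
    rw [hI, smul_sub, smul_smul, smul_sub, smul_smul, smul_smul, e1, e2, e3]
    module
  -- split the integral
  have hf_cont : ContinuousOn (fun s => Real.exp (a*s) • (ν t - ν s)) (Set.Icc t₀ t) :=
    hconte.continuousOn.smul (continuousOn_const.sub hcontI)
  have hintA : IntervalIntegrable (fun s => Real.exp (a*s) • (ν t - ν s)) volume t₀ m := by
    apply ContinuousOn.intervalIntegrable
    rw [Set.uIcc_of_le hm0]
    exact hf_cont.mono (Set.Icc_subset_Icc le_rfl hmt)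
  have hintB : IntervalIntegrable (fun s => Real.exp (a*s) • (ν t - ν s)) volume m t := by
    apply ContinuousOn.intervalIntegrable
    rw [Set.uIcc_of_le hmt]
    exact hf_cont.mono (Set.Icc_subset_Icc hm0 le_rfl)
  have hsplit : I = (∫ s in t₀..m, Real.exp (a*s) • (ν t - ν s))
      + ∫ s in m..t, Real.exp (a*s) • (ν t - ν s) :=
    (intervalIntegral.integral_add_adjacent_intervals hintA hintB).symm
  -- norm of the integrand is exp(a s) * ‖ν t - ν s‖
  have hnorm_int : ∀ (c d : ℝ), t₀ ≤ c → c ≤ d → d ≤ t → ∀ C : ℝ,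
      (∀ s ∈ Set.Icc c d, ‖ν t - ν s‖ ≤ C) →
      ‖∫ s in c..d, Real.exp (a*s) • (ν t - ν s)‖
        ≤ (Real.exp (a*d) - Real.exp (a*c))/a * C := by
    intro c d hc hcd hdt C hC
    have hCnn : 0 ≤ C := le_trans (norm_nonneg _) (hC c ⟨le_rfl, hcd⟩)
    calc ‖∫ s in c..d, Real.exp (a*s) • (ν t - ν s)‖
        ≤ ∫ s in c..d, ‖Real.exp (a*s) • (ν t - ν s)‖ :=
          intervalIntegral.norm_integral_le_integral_norm hcd
      _ ≤ ∫ s in c..d, Real.exp (a*s) * C := by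
          apply intervalIntegral.integral_mono_on hcd
          · apply ContinuousOn.intervalIntegrable
            rw [Set.uIcc_of_le hcd]
            exact (hf_cont.mono (Set.Icc_subset_Icc hc hdt)).norm
          · exact ((hconte.mul continuous_const).intervalIntegrable _ _)
          · intro x hx
            rw [norm_smul, Real.norm_eq_abs, abs_of_pos (Real.exp_pos _)]
            exact mul_le_mul_of_nonneg_left (hC x hx) (Real.exp_pos _).le
      _ = (Real.exp (a*d) - Real.exp (a*c))/a * C := by
          rw [intervalIntegral.integral_mul_const, expint]
  -- far part: crude bound 2Mb
  have hfar : ‖∫ s in t₀..m, Real.exp (a*s) • (ν t - ν s)‖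
      ≤ (Real.exp (a*m) - Real.exp (a*t₀))/a * (2*Mb) := by
    apply hnorm_int t₀ m le_rfl hm0 hmt
    intro s hs
    have hsT : (s:EReal) < T := lt_of_le_of_lt (EReal.coe_le_coe_iff.mpr (hs.2.trans hmt)) htT
    calc ‖ν t - ν s‖ ≤ ‖ν t‖ + ‖ν s‖ := norm_sub_le _ _
      _ ≤ Mb + Mb := add_le_add (hbound t htτ htT) (hbound s hs.1 hsT)
      _ = 2*Mb := by ring
  -- near part: uniform continuity bound Δ/2
  have hnear : ‖∫ s in m..t, Real.exp (a*s) • (ν t - ν s)‖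
      ≤ (Real.exp (a*t) - Real.exp (a*m))/a * (Δ/2) := by
    apply hnorm_int m t hm0 hmt le_rfl
    intro s hs
    have hsT : (s:EReal) < T := lt_of_le_of_lt (EReal.coe_le_coe_iff.mpr hs.2) htT
    apply hδν s t (le_trans hm0 hs.1) hsT htτ htT
    rw [abs_of_nonneg (by linarith [hs.2])]
    have := hs.1
    have hd : δ' ≤ δ := min_le_left _ _
    simp only [hmdef] at this
    linarith
  -- assemble
  have hEmt : (0:ℝ) < Real.exp (-(a*t)) := Real.exp_pos _
  have hec : Real.exp (a*t₀ - a*t) ≤ Real.exp (-(a*δ')) := by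
    apply Real.exp_le_exp.mpr
    nlinarith [ha0]
  have hem : Real.exp (-(a*t)) * Real.exp (a*m) = Real.exp (-(a*δ')) := by
    rw [← Real.exp_add]; congr 1; rw [hmdef]; ring
  have het : Real.exp (-(a*t)) * Real.exp (a*t) = 1 := by
    rw [← Real.exp_add]; simp
  have hIb : ‖I‖ ≤ (Real.exp (a*m) - Real.exp (a*t₀))/a * (2*Mb)
      + (Real.exp (a*t) - Real.exp (a*m))/a * (Δ/2) := by
    rw [hsplit]
    exact le_trans (norm_add_le _ _) (add_le_add hfar hnear)
  have hNa : Real.exp (-(a*δ')) * (a*‖θ₀‖ + 3*Mb) ≤ Δ/2 :=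
    hN a (le_trans (le_max_left _ _) ha)
  have hfinal : ‖-a • θ a t + ν t‖
      ≤ a * Real.exp (-(a*t)) * ‖I‖ + Real.exp (a*t₀ - a*t) * Mb
        + a * Real.exp (a*t₀ - a*t) * ‖θ₀‖ := by
    rw [hD]
    refine le_trans (norm_sub_le _ _) (add_le_add (le_trans (norm_add_le _ _)
      (add_le_add ?_ ?_)) ?_)
    · rw [norm_smul, Real.norm_eq_abs, abs_of_pos (by positivity)]
    · rw [norm_smul, Real.norm_eq_abs, abs_of_pos (Real.exp_pos _)]
      exact mul_le_mul_of_nonneg_left (hbound t htτ htT) (Real.exp_pos _).le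
    · rw [norm_smul, Real.norm_eq_abs, abs_of_pos (by positivity)]
  -- final numeric estimate
  have hE0 : (0:ℝ) < Real.exp (a*t₀) := Real.exp_pos _
  have hEm : (0:ℝ) < Real.exp (a*m) := Real.exp_pos _
  have step : a * Real.exp (-(a*t)) * ‖I‖
      ≤ Real.exp (-(a*δ')) * (2*Mb) + Δ/2 := by
    have h6 : a * Real.exp (-(a*t)) * ((Real.exp (a*m) - Real.exp (a*t₀))/a * (2*Mb)
        + (Real.exp (a*t) - Real.exp (a*m))/a * (Δ/2))
        ≤ Real.exp (-(a*δ')) * (2*Mb) + Δ/2 := by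
      rw [mul_add]
      apply add_le_add
      · have : a * Real.exp (-(a*t)) * ((Real.exp (a*m) - Real.exp (a*t₀))/a * (2*Mb))
            = (Real.exp (-(a*t)) * Real.exp (a*m) - Real.exp (-(a*t)) * Real.exp (a*t₀)) * (2*Mb) := by
          field_simp
        rw [this, hem]
        nlinarith [mul_pos hEmt hE0]
      · have : a * Real.exp (-(a*t)) * ((Real.exp (a*t) - Real.exp (a*m))/a * (Δ/2))
            = (Real.exp (-(a*t)) * Real.exp (a*t) - Real.exp (-(a*t)) * Real.exp (a*m)) * (Δ/2) := by
          field_simp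
        rw [this, het, hem]
        nlinarith [Real.exp_pos (-(a*δ'))]
    exact le_trans (mul_le_mul_of_nonneg_left hIb (by positivity)) h6
  have step2 : Real.exp (a*t₀ - a*t) * Mb + a * Real.exp (a*t₀ - a*t) * ‖θ₀‖
      ≤ Real.exp (-(a*δ')) * Mb + a * Real.exp (-(a*δ')) * ‖θ₀‖ := by
    apply add_le_add
    · exact mul_le_mul_of_nonneg_right hec hMb
    · have := mul_le_mul_of_nonneg_right hec (norm_nonneg θ₀)
      nlinarith
  calc ‖-a • θ a t + ν t‖
      ≤ a * Real.exp (-(a*t)) * ‖I‖ + Real.exp (a*t₀ - a*t) * Mb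
        + a * Real.exp (a*t₀ - a*t) * ‖θ₀‖ := hfinal
    _ ≤ (Real.exp (-(a*δ')) * (2*Mb) + Δ/2)
        + (Real.exp (-(a*δ')) * Mb + a * Real.exp (-(a*δ')) * ‖θ₀‖) := by
          have := add_le_add step step2
          linarith
    _ = Real.exp (-(a*δ')) * (a*‖θ₀‖ + 3*Mb) + Δ/2 := by ring
    _ ≤ Δ/2 + Δ/2 := by linarith
    _ = Δ := by ring
end
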